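/- Consider a coset spectral system which in addition satisfies M(1, 1, x) = 0 for every x ∈ X with x ≠ 1. Define b⁰(i, α) := Σ_{j∈I} Σ_{β∈A} S_{ij} · conj(Ṡ_{αβ}) · M(j, β, 1) for (i, α) ∈ I × A. Then b⁰(1, 1) = S̈_{11}, and for all (i, α) one has b⁰(i, α) = Σ_{x∈X} M(i, α, x) · S̈_{x1}; in particular Σ_{x∈X} M(i, α, x) · (S̈_{x1}/S̈_{11}) = b⁰(i, α)/b⁰(1, 1). -/

import Mathlib

open scoped BigOperators

/-- A modular datum `(I, S, ω, C)`: the genus-zero modular matrices data of §2.1. -/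
structure ModularDatum (I : Type*) [Fintype I] [DecidableEq I] : Type _ where
  one : I
  bar : I → I
  bar_invol : Function.Involutive bar
  bar_one : bar one = one
  S : Matrix I I ℂ
  S_symm : ∀ i j, S i j = S j i
  S_unitary : S ∈ Matrix.unitaryGroup I ℂ
  S_one_im : ∀ i, (S one i).im = 0
  S_one_pos : ∀ i, 0 < (S one i).re
  ω : I → ℂ
  ω_abs : ∀ i, ‖ω i‖ = 1
  ω_one : ω one = 1
  ω_bar : ∀ i, ω (bar i) = ω i
  C : ℂ
  C_abs : ‖C‖ = 1
  rel_STS : (S * Matrix.diagonal (fun i => C * ω i)) ^ 3 = S ^ 2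
  rel_Ssq : ∀ i j, (S ^ 2) i j = if j = bar i then 1 else 0

namespace ModularDatum

variable {I : Type*} [Fintype I] [DecidableEq I] (D : ModularDatum I)

private lemma conj_eq_inv' {z : ℂ} (h : ‖z‖ = 1) : (starRingEnd ℂ) z = z⁻¹ :=
  (Complex.inv_eq_conj h).symm

private lemma abs1_ne_zero {z : ℂ} (h : ‖z‖ = 1) : z ≠ 0 := by
  intro h0; rw [h0] at h; simp at h

lemma ω_ne (i : I) : D.ω i ≠ 0 := abs1_ne_zero (D.ω_abs i)
lemma C_ne : D.C ≠ 0 := abs1_ne_zero D.C_abs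
lemma conj_ω (i : I) : (starRingEnd ℂ) (D.ω i) = (D.ω i)⁻¹ := conj_eq_inv' (D.ω_abs i)
lemma conj_C : (starRingEnd ℂ) D.C = D.C⁻¹ := conj_eq_inv' D.C_abs

lemma S_one_real (i : I) : (starRingEnd ℂ) (D.S D.one i) = D.S D.one i :=
  Complex.conj_eq_iff_im.mpr (D.S_one_im i)

lemma S_one_ne (i : I) : D.S D.one i ≠ 0 := by
  intro h
  have := D.S_one_pos i
  rw [h] at this; simp at this

/-- row orthogonality -/
lemma row_orth (i k : I) : ∑ j, D.S i j * (starRingEnd ℂ) (D.S k j) = if i = k then 1 else 0 := by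
  have h := (Matrix.mem_unitaryGroup_iff).mp D.S_unitary
  have := congrFun (congrFun h i) k
  simpa [Matrix.mul_apply, Matrix.one_apply] using this

/-- conjugation symmetry -/
lemma conj_S (i k : I) : (starRingEnd ℂ) (D.S i k) = D.S (D.bar i) k := by
  have key : ∀ i k : I, D.S i k = (starRingEnd ℂ) (D.S k (D.bar i)) := by
    intro i k
    have h1 : ∑ y, (D.S ^ 2) i y * (starRingEnd ℂ) (D.S k y)
        = (starRingEnd ℂ) (D.S k (D.bar i)) := by
      simp only [D.rel_Ssq]
      rw [Finset.sum_eq_single (D.bar i)] <;> simp +contextual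
    have h2 : ∑ y, (D.S ^ 2) i y * (starRingEnd ℂ) (D.S k y) = D.S i k := by
      simp only [pow_two, Matrix.mul_apply, Finset.sum_mul]
      rw [Finset.sum_comm]
      calc ∑ l, ∑ y, D.S i l * D.S l y * (starRingEnd ℂ) (D.S k y)
          = ∑ l, D.S i l * (if l = k then 1 else 0) := by
            refine Finset.sum_congr rfl fun l _ => ?_
            rw [← D.row_orth l k, Finset.mul_sum]
            exact Finset.sum_congr rfl fun y _ => by ring
        _ = D.S i k := by rw [Finset.sum_eq_single k] <;> simp +contextual
    rw [← h1, h2]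
  have := key (D.bar i) k
  rw [D.bar_invol i] at this
  rw [this, D.S_symm i k]

lemma conj_S' (i k : I) : (starRingEnd ℂ) (D.S i k) = D.S i (D.bar k) := by
  rw [D.S_symm i k, D.conj_S, D.S_symm]

/-- entrywise S T S = T⁻¹ S T⁻¹ -/
lemma STS (i k : I) :
    ∑ j, D.S i j * (D.C * D.ω j) * D.S j k
      = (D.C * D.ω i)⁻¹ * D.S i k * (D.C * D.ω k)⁻¹ := by
  set T : Matrix I I ℂ := Matrix.diagonal (fun i => D.C * D.ω i) with hT
  have h3 : D.S * T * D.S * T * D.S * T = D.S * D.S := by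
    have := D.rel_STS
    rw [pow_succ, pow_succ, pow_one, pow_two] at this
    rw [← hT] at this
    simpa [mul_assoc] using this
  have hstar : star D.S * D.S = 1 := (Matrix.mem_unitaryGroup_iff').mp D.S_unitary
  have h4 : T * D.S * T * D.S * T = D.S := by
    calc T * D.S * T * D.S * T = star D.S * D.S * (T * D.S * T * D.S * T) := by rw [hstar, one_mul]
      _ = star D.S * (D.S * T * D.S * T * D.S * T) := by noncomm_ring
      _ = star D.S * (D.S * D.S) := by rw [h3]
      _ = star D.S * D.S * D.S := by noncomm_ring
      _ = D.S := by rw [hstar, one_mul]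
  have h5 := congrFun (congrFun h4 i) k
  have hexp : (T * D.S * T * D.S * T) i k
      = (D.C * D.ω i) * (∑ j, D.S i j * (D.C * D.ω j) * D.S j k) * (D.C * D.ω k) := by
    have e1 : T * D.S * T * D.S * T = T * (D.S * T * D.S) * T := by noncomm_ring
    have inner : (D.S * T * D.S) i k = ∑ j, D.S i j * (D.C * D.ω j) * D.S j k := by
      rw [Matrix.mul_apply]
      refine Finset.sum_congr rfl fun j _ => ?_
      rw [hT, Matrix.mul_diagonal]
    rw [e1, hT, Matrix.mul_diagonal, Matrix.diagonal_mul, ← hT, inner]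
  rw [hexp] at h5
  have hne1 : D.C * D.ω i ≠ 0 := mul_ne_zero D.C_ne (D.ω_ne i)
  have hne2 : D.C * D.ω k ≠ 0 := mul_ne_zero D.C_ne (D.ω_ne k)
  rw [← h5]
  generalize (∑ j, D.S i j * (D.C * D.ω j) * D.S j k) = s
  field_simp
  rw [eq_div_iff (mul_ne_zero hne1 (D.ω_ne k))]
  ring

/-- twisted Verlinde identity -/
lemma STSconj (i k : I) :
    ∑ j, D.S i j * D.ω j * (starRingEnd ℂ) (D.S j k)
      = (D.C ^ 3)⁻¹ * (D.ω i)⁻¹ * (D.ω k)⁻¹ * (starRingEnd ℂ) (D.S i k) := by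
  have h1 : ∀ j, (starRingEnd ℂ) (D.S j k) = D.S j (D.bar k) := fun j => D.conj_S' j k
  have h2 := D.STS i (D.bar k)
  have h3 : ∑ j, D.S i j * D.ω j * (starRingEnd ℂ) (D.S j k)
      = D.C⁻¹ * ∑ j, D.S i j * (D.C * D.ω j) * D.S j (D.bar k) := by
    rw [Finset.mul_sum]
    refine Finset.sum_congr rfl fun j _ => ?_
    rw [h1 j, show D.C⁻¹ * (D.S i j * (D.C * D.ω j) * D.S j (D.bar k))
        = (D.C⁻¹ * D.C) * (D.S i j * D.ω j * D.S j (D.bar k)) by ring,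
      inv_mul_cancel₀ D.C_ne, one_mul]
  rw [h3, h2, D.ω_bar, ← D.conj_S' i k, mul_inv, mul_inv]
  ring

end ModularDatum
namespace ModularDatum

variable {I : Type*} [Fintype I] [DecidableEq I] (D : ModularDatum I)

lemma conD1 (i c : I) :
    ∑ j, D.S i j * (D.S (D.bar j) c / D.S D.one c)
      = (if c = i then 1 else 0) / D.S D.one c := by
  simp only [← mul_div_assoc]
  rw [← Finset.sum_div]
  congr 1
  have h : ∀ j, D.S (D.bar j) c = (starRingEnd ℂ) (D.S c j) := fun j => by
    rw [← D.conj_S j c, D.S_symm j c]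
  simp only [h]
  rw [D.row_orth i c]
  by_cases hic : i = c
  · simp [hic]
  · rw [if_neg hic, if_neg fun hh => hic hh.symm]

lemma conD2 (α c : I) :
    ∑ β, (starRingEnd ℂ) (D.S α β) * (D.S β c / D.S D.one c)
      = (if c = α then 1 else 0) / D.S D.one c := by
  simp only [← mul_div_assoc]
  rw [← Finset.sum_div]
  congr 1
  have h : ∀ β, (starRingEnd ℂ) (D.S α β) * D.S β c
      = (starRingEnd ℂ) (D.S α β * (starRingEnd ℂ) (D.S c β)) := fun β => by
    rw [map_mul, Complex.conj_conj, D.S_symm c β]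
  simp only [h, ← map_sum]
  rw [D.row_orth α c]
  by_cases hic : α = c
  · simp [hic]
  · rw [if_neg hic, if_neg fun hh => hic hh.symm]
    simp

lemma conD3 (i c : I) :
    ∑ j, (D.S i j * D.ω j) * (D.S (D.bar j) c / D.S D.one c)
      = ((D.C ^ 3)⁻¹ * (D.ω i)⁻¹ * (D.ω c)⁻¹ * (starRingEnd ℂ) (D.S i c)) / D.S D.one c := by
  simp only [← mul_div_assoc]
  rw [← Finset.sum_div]
  congr 1
  have h : ∀ j, D.S (D.bar j) c = (starRingEnd ℂ) (D.S j c) := fun j => (D.conj_S j c).symm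
  simp only [h]
  exact D.STSconj i c

lemma conD4 (α c : I) :
    ∑ β, ((starRingEnd ℂ) (D.S α β) * (D.ω β)⁻¹) * (D.S β c / D.S D.one c)
      = (D.C ^ 3 * D.ω α * D.ω c * D.S α c) / D.S D.one c := by
  simp only [← mul_div_assoc]
  rw [← Finset.sum_div]
  congr 1
  have h : ∀ β, (starRingEnd ℂ) (D.S α β) * (D.ω β)⁻¹ * D.S β c
      = (starRingEnd ℂ) (D.S α β * D.ω β * (starRingEnd ℂ) (D.S β c)) := fun β => by
    rw [map_mul, map_mul, Complex.conj_conj, D.conj_ω]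
  simp only [h, ← map_sum]
  rw [D.STSconj α c]
  rw [map_mul, map_mul, map_mul, Complex.conj_conj, map_inv₀, map_inv₀, map_inv₀,
    map_pow, D.conj_C, D.conj_ω, D.conj_ω, inv_pow, inv_inv, inv_inv, inv_inv]

end ModularDatum


/-- A coset spectral system: three modular data `(I,S,ω,C)`, `(A,Ṡ,ω̇,Ċ)`, `(X,S̈,ω̈,C̈)`,
a nonnegative function `M` on `I × A × X` with `M(1,1,1) = 1`, and a finite spectral index
set `E` with maps `k, δ, ζ` and nonnegative weights `p`, satisfying the conclusions (a)–(d)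
of Lemma A of §3.1 of the paper. -/
structure CosetSpectralSystem (I A X E : Type*)
    [Fintype I] [DecidableEq I] [Fintype A] [DecidableEq A]
    [Fintype X] [DecidableEq X] [Fintype E] : Type _ where
  G : ModularDatum I
  H : ModularDatum A
  Q : ModularDatum X
  M : I → A → X → ℝ
  M_nonneg : ∀ i α x, 0 ≤ M i α x
  M_vac : M G.one H.one Q.one = 1
  k : E → I
  δ : E → A
  ζ : E → X
  p : E → ℝ
  p_nonneg : ∀ e, 0 ≤ p e
  spec : ∀ i α x, (M i α x : ℂ) =
    ∑ e, (G.S (G.bar i) (k e) / G.S G.one (k e)) *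
         (H.S α (δ e) / H.S H.one (δ e)) *
         (Q.S x (ζ e) / Q.S Q.one (ζ e)) * (p e : ℂ)
  vac_node : ∃ e₀, k e₀ = G.one ∧ δ e₀ = H.one ∧ ζ e₀ = Q.one ∧ 0 < p e₀
  phase : ∀ j β y, M j β y ≠ 0 → Q.ω y = G.ω j * (H.ω β)⁻¹
  norm_one : ∑ j, ∑ β, ∑ y,
    G.S G.one j * star (H.S H.one β) * star (Q.S Q.one y) * (M j β y : ℂ) = 1

private lemma sum3_factor {I A X : Type*} [Fintype I] [Fintype A] [Fintype X]
    (f : I → ℂ) (g : A → ℂ) (h : X → ℂ) (c : ℂ) :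
    ∑ j, ∑ β, ∑ y, f j * g β * h y * c
      = (∑ j, f j) * (∑ β, g β) * (∑ y, h y) * c := by
  symm
  calc (∑ j, f j) * (∑ β, g β) * (∑ y, h y) * c
      = (∑ j, f j) * ((∑ β, g β) * ((∑ y, h y) * c)) := by ring
    _ = ∑ j, f j * ((∑ β, g β) * ((∑ y, h y) * c)) := by rw [Finset.sum_mul]
    _ = ∑ j, ∑ β, f j * (g β * ((∑ y, h y) * c)) := by
        refine Finset.sum_congr rfl fun j _ => ?_
        rw [Finset.sum_mul, Finset.mul_sum]
    _ = ∑ j, ∑ β, ∑ y, f j * (g β * (h y * c)) := by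
        refine Finset.sum_congr rfl fun j _ => ?_
        refine Finset.sum_congr rfl fun β _ => ?_
        rw [Finset.sum_mul, Finset.mul_sum, Finset.mul_sum]
    _ = ∑ j, ∑ β, ∑ y, f j * g β * h y * c := by
        refine Finset.sum_congr rfl fun j _ => ?_
        refine Finset.sum_congr rfl fun β _ => ?_
        refine Finset.sum_congr rfl fun y _ => ?_
        ring

private lemma sum_swap4 {I A X E : Type*} [Fintype I] [Fintype A] [Fintype X] [Fintype E]
    (f : I → A → X → E → ℂ) :
    (∑ j, ∑ β, ∑ y, ∑ e, f j β y e) = ∑ e, ∑ j, ∑ β, ∑ y, f j β y e :=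
  calc (∑ j, ∑ β, ∑ y, ∑ e, f j β y e)
      = ∑ j, ∑ β, ∑ e, ∑ y, f j β y e :=
        Finset.sum_congr rfl fun j _ => Finset.sum_congr rfl fun β _ => Finset.sum_comm
    _ = ∑ j, ∑ e, ∑ β, ∑ y, f j β y e :=
        Finset.sum_congr rfl fun j _ => Finset.sum_comm
    _ = ∑ e, ∑ j, ∑ β, ∑ y, f j β y e := Finset.sum_comm

namespace CosetSpectralSystem

variable {I A X E : Type*}
    [Fintype I] [DecidableEq I] [Fintype A] [DecidableEq A]
    [Fintype X] [DecidableEq X] [Fintype E]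
    (𝒮 : CosetSpectralSystem I A X E)

lemma master (u : I → ℂ) (v : A → ℂ) (w : X → ℂ) :
    ∑ j, ∑ β, ∑ y, u j * v β * w y * (𝒮.M j β y : ℂ)
      = ∑ e, (∑ j, u j * (𝒮.G.S (𝒮.G.bar j) (𝒮.k e) / 𝒮.G.S 𝒮.G.one (𝒮.k e)))
           * (∑ β, v β * (𝒮.H.S β (𝒮.δ e) / 𝒮.H.S 𝒮.H.one (𝒮.δ e)))
           * (∑ y, w y * (𝒮.Q.S y (𝒮.ζ e) / 𝒮.Q.S 𝒮.Q.one (𝒮.ζ e)))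
           * (𝒮.p e : ℂ) := by
  conv_lhs => simp only [𝒮.spec, Finset.mul_sum]
  rw [sum_swap4 (fun j β y e => u j * v β * w y *
    ((𝒮.G.S (𝒮.G.bar j) (𝒮.k e) / 𝒮.G.S 𝒮.G.one (𝒮.k e)) *
     (𝒮.H.S β (𝒮.δ e) / 𝒮.H.S 𝒮.H.one (𝒮.δ e)) *
     (𝒮.Q.S y (𝒮.ζ e) / 𝒮.Q.S 𝒮.Q.one (𝒮.ζ e)) * (𝒮.p e : ℂ)))]
  refine Finset.sum_congr rfl fun e _ => ?_
  rw [← sum3_factor (fun j => u j * (𝒮.G.S (𝒮.G.bar j) (𝒮.k e) / 𝒮.G.S 𝒮.G.one (𝒮.k e)))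
      (fun β => v β * (𝒮.H.S β (𝒮.δ e) / 𝒮.H.S 𝒮.H.one (𝒮.δ e)))
      (fun y => w y * (𝒮.Q.S y (𝒮.ζ e) / 𝒮.Q.S 𝒮.Q.one (𝒮.ζ e))) (𝒮.p e : ℂ)]
  refine Finset.sum_congr rfl fun j _ => ?_
  refine Finset.sum_congr rfl fun β _ => ?_
  refine Finset.sum_congr rfl fun y _ => ?_
  ring

end CosetSpectralSystem
namespace CosetSpectralSystem

variable {I A X E : Type*}
    [Fintype I] [DecidableEq I] [Fintype A] [DecidableEq A]
    [Fintype X] [DecidableEq X] [Fintype E]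
    (𝒮 : CosetSpectralSystem I A X E)

/-- the triple Fourier transform of M -/
noncomputable def csN (i : I) (α : A) (x : X) : ℂ :=
  ∑ j, ∑ β, ∑ y, 𝒮.G.S i j * (starRingEnd ℂ) (𝒮.H.S α β) *
    (starRingEnd ℂ) (𝒮.Q.S x y) * (𝒮.M j β y : ℂ)

lemma csN_vac : 𝒮.csN 𝒮.G.one 𝒮.H.one 𝒮.Q.one = 1 := by
  simp only [csN, starRingEnd_apply]
  exact 𝒮.norm_one

lemma pp1 (j : I) (β : A) (y : X) :
    (𝒮.G.ω j * (𝒮.H.ω β)⁻¹ * (𝒮.Q.ω y)⁻¹) * (𝒮.M j β y : ℂ) = (𝒮.M j β y : ℂ) := by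
  by_cases h : 𝒮.M j β y = 0
  · rw [h]; simp
  · rw [𝒮.phase j β y h,
      mul_inv_cancel₀ (mul_ne_zero (𝒮.G.ω_ne j) (inv_ne_zero (𝒮.H.ω_ne β))), one_mul]

lemma pp2 (i : I) (α : A) (x : X) :
    ((𝒮.G.ω i)⁻¹ * 𝒮.H.ω α * 𝒮.Q.ω x) * (𝒮.M i α x : ℂ) = (𝒮.M i α x : ℂ) := by
  by_cases h : 𝒮.M i α x = 0
  · rw [h]; simp
  · rw [𝒮.phase i α x h,
      show (𝒮.G.ω i)⁻¹ * 𝒮.H.ω α * (𝒮.G.ω i * (𝒮.H.ω α)⁻¹)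
        = ((𝒮.G.ω i)⁻¹ * 𝒮.G.ω i) * (𝒮.H.ω α * (𝒮.H.ω α)⁻¹) by ring,
      inv_mul_cancel₀ (𝒮.G.ω_ne i), mul_inv_cancel₀ (𝒮.H.ω_ne α), one_mul, one_mul]

/-- E-support form of the transform -/
lemma lemN (i : I) (α : A) (x : X) :
    𝒮.csN i α x = ∑ e, if 𝒮.k e = i ∧ 𝒮.δ e = α ∧ 𝒮.ζ e = x
      then (𝒮.p e : ℂ) / (𝒮.G.S 𝒮.G.one i * 𝒮.H.S 𝒮.H.one α * 𝒮.Q.S 𝒮.Q.one x) else 0 := by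
  refine (master 𝒮 _ _ _).trans ?_
  refine Finset.sum_congr rfl fun e _ => ?_
  rw [𝒮.G.conD1 i (𝒮.k e), 𝒮.H.conD2 α (𝒮.δ e), 𝒮.Q.conD2 x (𝒮.ζ e)]
  by_cases h1 : 𝒮.k e = i <;> by_cases h2 : 𝒮.δ e = α <;> by_cases h3 : 𝒮.ζ e = x <;>
    simp [h1, h2, h3] <;> ring

/-- twisted transform evaluation -/
lemma lemW (i : I) (α : A) (x : X) :
    𝒮.csN i α x = (𝒮.G.C ^ 3)⁻¹ * 𝒮.H.C ^ 3 * 𝒮.Q.C ^ 3 * (𝒮.G.ω i)⁻¹ * 𝒮.H.ω α * 𝒮.Q.ω x *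
      ∑ e, ((𝒮.G.ω (𝒮.k e))⁻¹ * 𝒮.H.ω (𝒮.δ e) * 𝒮.Q.ω (𝒮.ζ e)) *
        ((starRingEnd ℂ) (𝒮.G.S i (𝒮.k e)) * 𝒮.H.S α (𝒮.δ e) * 𝒮.Q.S x (𝒮.ζ e) * (𝒮.p e : ℂ) /
         (𝒮.G.S 𝒮.G.one (𝒮.k e) * 𝒮.H.S 𝒮.H.one (𝒮.δ e) * 𝒮.Q.S 𝒮.Q.one (𝒮.ζ e))) := by
  have step1 : 𝒮.csN i α x = ∑ j, ∑ β, ∑ y,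
      (𝒮.G.S i j * 𝒮.G.ω j) * ((starRingEnd ℂ) (𝒮.H.S α β) * (𝒮.H.ω β)⁻¹) *
      ((starRingEnd ℂ) (𝒮.Q.S x y) * (𝒮.Q.ω y)⁻¹) * (𝒮.M j β y : ℂ) := by
    simp only [csN]
    refine Finset.sum_congr rfl fun j _ => Finset.sum_congr rfl fun β _ =>
      Finset.sum_congr rfl fun y _ => ?_
    rw [show (𝒮.G.S i j * 𝒮.G.ω j) * ((starRingEnd ℂ) (𝒮.H.S α β) * (𝒮.H.ω β)⁻¹) *
        ((starRingEnd ℂ) (𝒮.Q.S x y) * (𝒮.Q.ω y)⁻¹) * (𝒮.M j β y : ℂ)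
        = 𝒮.G.S i j * (starRingEnd ℂ) (𝒮.H.S α β) * (starRingEnd ℂ) (𝒮.Q.S x y) *
          ((𝒮.G.ω j * (𝒮.H.ω β)⁻¹ * (𝒮.Q.ω y)⁻¹) * (𝒮.M j β y : ℂ)) by ring, pp1 𝒮 j β y]
  rw [step1]
  refine (master 𝒮 _ _ _).trans ?_
  rw [Finset.mul_sum]
  refine Finset.sum_congr rfl fun e _ => ?_
  rw [𝒮.G.conD3 i (𝒮.k e), 𝒮.H.conD4 α (𝒮.δ e), 𝒮.Q.conD4 x (𝒮.ζ e)]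
  ring

lemma lemB : ∑ e, (𝒮.p e : ℂ) = 1 := by
  have h2 : ∀ e, (𝒮.G.S (𝒮.G.bar 𝒮.G.one) (𝒮.k e) / 𝒮.G.S 𝒮.G.one (𝒮.k e)) *
      (𝒮.H.S 𝒮.H.one (𝒮.δ e) / 𝒮.H.S 𝒮.H.one (𝒮.δ e)) *
      (𝒮.Q.S 𝒮.Q.one (𝒮.ζ e) / 𝒮.Q.S 𝒮.Q.one (𝒮.ζ e)) * (𝒮.p e : ℂ) = (𝒮.p e : ℂ) := fun e => by
    rw [𝒮.G.bar_one, div_self (𝒮.G.S_one_ne _), div_self (𝒮.H.S_one_ne _),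
      div_self (𝒮.Q.S_one_ne _)]
    ring
  have h3 := 𝒮.spec 𝒮.G.one 𝒮.H.one 𝒮.Q.one
  rw [𝒮.M_vac] at h3
  simp only [h2] at h3
  rw [← h3]
  norm_num

lemma lemC : ∑ e, ((𝒮.G.ω (𝒮.k e))⁻¹ * 𝒮.H.ω (𝒮.δ e) * 𝒮.Q.ω (𝒮.ζ e)) * (𝒮.p e : ℂ)
    = 𝒮.G.C ^ 3 * (𝒮.H.C ^ 3)⁻¹ * (𝒮.Q.C ^ 3)⁻¹ := by
  have h := lemW 𝒮 𝒮.G.one 𝒮.H.one 𝒮.Q.one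
  rw [csN_vac] at h
  have hD : ∀ e, (starRingEnd ℂ) (𝒮.G.S 𝒮.G.one (𝒮.k e)) * 𝒮.H.S 𝒮.H.one (𝒮.δ e) *
      𝒮.Q.S 𝒮.Q.one (𝒮.ζ e) * (𝒮.p e : ℂ) /
      (𝒮.G.S 𝒮.G.one (𝒮.k e) * 𝒮.H.S 𝒮.H.one (𝒮.δ e) * 𝒮.Q.S 𝒮.Q.one (𝒮.ζ e))
      = (𝒮.p e : ℂ) := fun e => by
    have ha := 𝒮.G.S_one_ne (𝒮.k e)
    have hb := 𝒮.H.S_one_ne (𝒮.δ e)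
    have hc := 𝒮.Q.S_one_ne (𝒮.ζ e)
    rw [𝒮.G.S_one_real]
    field_simp
  simp only [hD, 𝒮.G.ω_one, 𝒮.H.ω_one, 𝒮.Q.ω_one, inv_one, mul_one] at h
  have hg : 𝒮.G.C ^ 3 ≠ 0 := pow_ne_zero _ 𝒮.G.C_ne
  have hh : 𝒮.H.C ^ 3 ≠ 0 := pow_ne_zero _ 𝒮.H.C_ne
  have hq : 𝒮.Q.C ^ 3 ≠ 0 := pow_ne_zero _ 𝒮.Q.C_ne
  field_simp at h ⊢
  rw [eq_div_iff (mul_ne_zero hh hq)]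
  rw [eq_div_iff hg] at h
  linear_combination -h

end CosetSpectralSystem
namespace CosetSpectralSystem

variable {I A X E : Type*}
    [Fintype I] [DecidableEq I] [Fintype A] [DecidableEq A]
    [Fintype X] [DecidableEq X] [Fintype E]
    (𝒮 : CosetSpectralSystem I A X E)

lemma lemB_real : ∑ e, 𝒮.p e = 1 := by
  have := lemB 𝒮
  exact_mod_cast this

/-- equality case in the triangle inequality: each node phase is the common phase -/
lemma lemD (e : E) :
    ((𝒮.G.ω (𝒮.k e))⁻¹ * 𝒮.H.ω (𝒮.δ e) * 𝒮.Q.ω (𝒮.ζ e)) * (𝒮.p e : ℂ)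
      = (𝒮.G.C ^ 3 * (𝒮.H.C ^ 3)⁻¹ * (𝒮.Q.C ^ 3)⁻¹) * (𝒮.p e : ℂ) := by
  set μ : ℂ := 𝒮.G.C ^ 3 * (𝒮.H.C ^ 3)⁻¹ * (𝒮.Q.C ^ 3)⁻¹ with hμdef
  set z : E → ℂ := fun e => (𝒮.G.ω (𝒮.k e))⁻¹ * 𝒮.H.ω (𝒮.δ e) * 𝒮.Q.ω (𝒮.ζ e) with hzdef
  show z e * (𝒮.p e : ℂ) = μ * (𝒮.p e : ℂ)
  have hz : ∀ e, ‖z e‖ = 1 := by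
    intro e
    simp [hzdef, norm_mul, norm_inv, 𝒮.G.ω_abs, 𝒮.H.ω_abs, 𝒮.Q.ω_abs]
  have hμ : ‖μ‖ = 1 := by
    simp [hμdef, norm_mul, norm_inv, norm_pow, 𝒮.G.C_abs, 𝒮.H.C_abs, 𝒮.Q.C_abs]
  have hμμ : μ * (starRingEnd ℂ) μ = 1 := by
    rw [Complex.mul_conj, Complex.normSq_eq_norm_sq, hμ]
    norm_num
  have hsum : ∑ e, z e * (𝒮.p e : ℂ) = μ := lemC 𝒮
  clear_value μ z
  have h1 : ∑ e, ((starRingEnd ℂ) μ * (z e * (𝒮.p e : ℂ))).re = 1 := by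
    rw [← Complex.re_sum, ← Finset.mul_sum, hsum]
    rw [show (starRingEnd ℂ) μ * μ = 1 by rw [mul_comm]; exact hμμ]
    simp
  have habs : ∀ e, ‖(starRingEnd ℂ) μ * (z e * (𝒮.p e : ℂ))‖ = 𝒮.p e := by
    intro e
    rw [norm_mul, norm_mul, Complex.norm_conj, hμ, hz e, Complex.norm_of_nonneg (𝒮.p_nonneg e)]
    ring
  have h2 : ∀ e, ((starRingEnd ℂ) μ * (z e * (𝒮.p e : ℂ))).re ≤ 𝒮.p e := fun e =>
    (Complex.re_le_norm _).trans (le_of_eq (habs e))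
  have h3 : ∑ e, (𝒮.p e - ((starRingEnd ℂ) μ * (z e * (𝒮.p e : ℂ))).re) = 0 := by
    rw [Finset.sum_sub_distrib, h1, lemB_real 𝒮]
    ring
  have h4 := (Finset.sum_eq_zero_iff_of_nonneg
    (fun e _ => sub_nonneg.mpr (h2 e))).mp h3
  have h5 : ((starRingEnd ℂ) μ * (z e * (𝒮.p e : ℂ))).re = 𝒮.p e := by
    have := h4 e (Finset.mem_univ e)
    linarith [this]
  by_cases hp : 𝒮.p e = 0
  · rw [hp]
    simp
  · have him : ((starRingEnd ℂ) μ * (z e * (𝒮.p e : ℂ))).im = 0 := by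
      have hn := Complex.sq_norm ((starRingEnd ℂ) μ * (z e * (𝒮.p e : ℂ)))
      rw [habs e, Complex.normSq_apply, h5] at hn
      nlinarith [hn]
    have hw : (starRingEnd ℂ) μ * (z e * (𝒮.p e : ℂ)) = ((𝒮.p e : ℝ) : ℂ) := by
      apply Complex.ext
      · rw [h5]; simp
      · rw [him]; simp
    calc z e * (𝒮.p e : ℂ) = (μ * (starRingEnd ℂ) μ) * (z e * (𝒮.p e : ℂ)) := by
          rw [hμμ, one_mul]
      _ = μ * ((starRingEnd ℂ) μ * (z e * (𝒮.p e : ℂ))) := by ring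
      _ = μ * (𝒮.p e : ℂ) := by rw [hw]

/-- the crux: the transform equals a phase times M -/
lemma lemE (i : I) (α : A) (x : X) :
    𝒮.csN i α x = ((𝒮.G.ω i)⁻¹ * 𝒮.H.ω α * 𝒮.Q.ω x) * (𝒮.M i α x : ℂ) := by
  rw [lemW]
  have hrw : ∀ e, ((𝒮.G.ω (𝒮.k e))⁻¹ * 𝒮.H.ω (𝒮.δ e) * 𝒮.Q.ω (𝒮.ζ e)) *
      ((starRingEnd ℂ) (𝒮.G.S i (𝒮.k e)) * 𝒮.H.S α (𝒮.δ e) * 𝒮.Q.S x (𝒮.ζ e) * (𝒮.p e : ℂ) /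
       (𝒮.G.S 𝒮.G.one (𝒮.k e) * 𝒮.H.S 𝒮.H.one (𝒮.δ e) * 𝒮.Q.S 𝒮.Q.one (𝒮.ζ e)))
      = (𝒮.G.C ^ 3 * (𝒮.H.C ^ 3)⁻¹ * (𝒮.Q.C ^ 3)⁻¹) *
        ((starRingEnd ℂ) (𝒮.G.S i (𝒮.k e)) * 𝒮.H.S α (𝒮.δ e) * 𝒮.Q.S x (𝒮.ζ e) * (𝒮.p e : ℂ) /
         (𝒮.G.S 𝒮.G.one (𝒮.k e) * 𝒮.H.S 𝒮.H.one (𝒮.δ e) * 𝒮.Q.S 𝒮.Q.one (𝒮.ζ e))) := fun e => by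
    linear_combination ((starRingEnd ℂ) (𝒮.G.S i (𝒮.k e)) * 𝒮.H.S α (𝒮.δ e) * 𝒮.Q.S x (𝒮.ζ e) /
      (𝒮.G.S 𝒮.G.one (𝒮.k e) * 𝒮.H.S 𝒮.H.one (𝒮.δ e) * 𝒮.Q.S 𝒮.Q.one (𝒮.ζ e))) * lemD 𝒮 e
  simp only [hrw]
  rw [← Finset.mul_sum]
  have hM : ∑ e, (starRingEnd ℂ) (𝒮.G.S i (𝒮.k e)) * 𝒮.H.S α (𝒮.δ e) * 𝒮.Q.S x (𝒮.ζ e) *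
      (𝒮.p e : ℂ) / (𝒮.G.S 𝒮.G.one (𝒮.k e) * 𝒮.H.S 𝒮.H.one (𝒮.δ e) * 𝒮.Q.S 𝒮.Q.one (𝒮.ζ e))
      = (𝒮.M i α x : ℂ) := by
    rw [𝒮.spec i α x]
    refine Finset.sum_congr rfl fun e _ => ?_
    rw [𝒮.G.conj_S i (𝒮.k e)]
    ring
  rw [hM]
  have hg := 𝒮.G.C_ne
  have hh := 𝒮.H.C_ne
  have hq := 𝒮.Q.C_ne
  have hi := 𝒮.G.ω_ne i
  field_simp

/-- conclusion: M is its own transform -/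
lemma lemF (i : I) (α : A) (x : X) : 𝒮.csN i α x = (𝒮.M i α x : ℂ) :=
  (lemE 𝒮 i α x).trans (pp2 𝒮 i α x)

end CosetSpectralSystem
namespace CosetSpectralSystem

variable {I A X E : Type*}
    [Fintype I] [DecidableEq I] [Fintype A] [DecidableEq A]
    [Fintype X] [DecidableEq X] [Fintype E]
    (𝒮 : CosetSpectralSystem I A X E)

/-- common E-support form of both sides of the main identity -/
lemma lemG (i : I) (α : A) :
    ∑ x, (𝒮.M i α x : ℂ) * 𝒮.Q.S x 𝒮.Q.one
      = ∑ e, if 𝒮.k e = i ∧ 𝒮.δ e = α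
          then (𝒮.p e : ℂ) / (𝒮.G.S 𝒮.G.one i * 𝒮.H.S 𝒮.H.one α) else 0 := by
  calc ∑ x, (𝒮.M i α x : ℂ) * 𝒮.Q.S x 𝒮.Q.one
      = ∑ x, ∑ e, (if 𝒮.k e = i ∧ 𝒮.δ e = α ∧ 𝒮.ζ e = x
          then (𝒮.p e : ℂ) / (𝒮.G.S 𝒮.G.one i * 𝒮.H.S 𝒮.H.one α * 𝒮.Q.S 𝒮.Q.one x) else 0)
          * 𝒮.Q.S x 𝒮.Q.one := by
        refine Finset.sum_congr rfl fun x _ => ?_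
        rw [← lemF 𝒮 i α x, lemN 𝒮 i α x, Finset.sum_mul]
    _ = ∑ e, ∑ x, (if 𝒮.k e = i ∧ 𝒮.δ e = α ∧ 𝒮.ζ e = x
          then (𝒮.p e : ℂ) / (𝒮.G.S 𝒮.G.one i * 𝒮.H.S 𝒮.H.one α * 𝒮.Q.S 𝒮.Q.one x) else 0)
          * 𝒮.Q.S x 𝒮.Q.one := Finset.sum_comm
    _ = ∑ e, if 𝒮.k e = i ∧ 𝒮.δ e = α
          then (𝒮.p e : ℂ) / (𝒮.G.S 𝒮.G.one i * 𝒮.H.S 𝒮.H.one α) else 0 := by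
        refine Finset.sum_congr rfl fun e _ => ?_
        by_cases h12 : 𝒮.k e = i ∧ 𝒮.δ e = α
        · rw [if_pos h12, Finset.sum_eq_single (𝒮.ζ e)]
          · rw [if_pos ⟨h12.1, h12.2, rfl⟩, 𝒮.Q.S_symm (𝒮.ζ e) 𝒮.Q.one]
            have hc := 𝒮.Q.S_one_ne (𝒮.ζ e)
            have ha := 𝒮.G.S_one_ne i
            have hb := 𝒮.H.S_one_ne α
            field_simp
          · intro x _ hx
            rw [if_neg fun hcon => hx hcon.2.2.symm, zero_mul]
          · intro hmem; exact absurd (Finset.mem_univ _) hmem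
        · rw [if_neg h12]
          refine Finset.sum_eq_zero fun x _ => ?_
          rw [if_neg fun hcon => h12 ⟨hcon.1, hcon.2.1⟩, zero_mul]

lemma lemH (i : I) (α : A) :
    ∑ j, ∑ β, 𝒮.G.S i j * (starRingEnd ℂ) (𝒮.H.S α β) * (𝒮.M j β 𝒮.Q.one : ℂ)
      = ∑ e, if 𝒮.k e = i ∧ 𝒮.δ e = α
          then (𝒮.p e : ℂ) / (𝒮.G.S 𝒮.G.one i * 𝒮.H.S 𝒮.H.one α) else 0 := by
  have hstep : ∑ j, ∑ β, 𝒮.G.S i j * (starRingEnd ℂ) (𝒮.H.S α β) * (𝒮.M j β 𝒮.Q.one : ℂ)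
      = ∑ j, ∑ β, ∑ y, 𝒮.G.S i j * (starRingEnd ℂ) (𝒮.H.S α β) *
          (if y = 𝒮.Q.one then (1:ℂ) else 0) * (𝒮.M j β y : ℂ) := by
    refine Finset.sum_congr rfl fun j _ => Finset.sum_congr rfl fun β _ => ?_
    rw [Finset.sum_eq_single 𝒮.Q.one]
    · rw [if_pos rfl, mul_one]
    · intro y _ hy
      rw [if_neg hy, mul_zero, zero_mul]
    · intro hmem; exact absurd (Finset.mem_univ _) hmem
  rw [hstep]
  refine (master 𝒮 _ _ _).trans ?_
  refine Finset.sum_congr rfl fun e _ => ?_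
  rw [𝒮.G.conD1 i (𝒮.k e), 𝒮.H.conD2 α (𝒮.δ e)]
  have hy : ∑ y, (if y = 𝒮.Q.one then (1:ℂ) else 0) *
      (𝒮.Q.S y (𝒮.ζ e) / 𝒮.Q.S 𝒮.Q.one (𝒮.ζ e)) = 1 := by
    rw [Finset.sum_eq_single 𝒮.Q.one]
    · rw [if_pos rfl, one_mul, div_self (𝒮.Q.S_one_ne (𝒮.ζ e))]
    · intro y _ hy'
      rw [if_neg hy', zero_mul]
    · intro hmem; exact absurd (Finset.mem_univ _) hmem
  rw [hy]
  by_cases h1 : 𝒮.k e = i <;> by_cases h2 : 𝒮.δ e = α <;> simp [h1, h2] <;> ring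

end CosetSpectralSystem


/-- Corollary 3.3 / Theorem 3.4 in abstract form. If in addition
`M(1,1,x) = 0` for `x ≠ 1` and `b⁰(i,α) = Σ_{j,β} S_{ij} conj(Ṡ_{αβ}) M(j,β,1)`, then
`b⁰(1,1) = S̈_{11}`, `b⁰(i,α) = Σ_x M(i,α,x) S̈_{x1}`, and in particular
`Σ_x M(i,α,x) (S̈_{x1}/S̈_{11}) = b⁰(i,α)/b⁰(1,1)`. -/
theorem cosetSpectralSystem_statistical_dimension {I A X E : Type*}
    [Fintype I] [DecidableEq I] [Fintype A] [DecidableEq A]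
    [Fintype X] [DecidableEq X] [Fintype E]
    (𝒮 : CosetSpectralSystem I A X E)
    (hM : ∀ x : X, x ≠ 𝒮.Q.one → 𝒮.M 𝒮.G.one 𝒮.H.one x = 0)
    (b₀ : I → A → ℂ)
    (hb₀ : ∀ i α, b₀ i α
      = ∑ j, ∑ β, 𝒮.G.S i j * star (𝒮.H.S α β) * (𝒮.M j β 𝒮.Q.one : ℂ)) :
    b₀ 𝒮.G.one 𝒮.H.one = 𝒮.Q.S 𝒮.Q.one 𝒮.Q.one ∧
    (∀ i α, b₀ i α = ∑ x, (𝒮.M i α x : ℂ) * 𝒮.Q.S x 𝒮.Q.one) ∧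
    (∀ i α, ∑ x, (𝒮.M i α x : ℂ) * (𝒮.Q.S x 𝒮.Q.one / 𝒮.Q.S 𝒮.Q.one 𝒮.Q.one)
      = b₀ i α / b₀ 𝒮.G.one 𝒮.H.one) := by
  open CosetSpectralSystem in
  have hg2 : ∀ i α, b₀ i α = ∑ x, (𝒮.M i α x : ℂ) * 𝒮.Q.S x 𝒮.Q.one := by
    intro i α
    have h1 := lemG 𝒮 i α
    have h2 := lemH 𝒮 i α
    rw [hb₀ i α]
    simp only [← starRingEnd_apply]
    rw [h2, ← h1]
  have hg1 : b₀ 𝒮.G.one 𝒮.H.one = 𝒮.Q.S 𝒮.Q.one 𝒮.Q.one := by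
    rw [hg2 𝒮.G.one 𝒮.H.one, Finset.sum_eq_single 𝒮.Q.one]
    · rw [𝒮.M_vac]; norm_num
    · intro x _ hx
      rw [hM x hx]
      norm_num
    · intro hmem; exact absurd (Finset.mem_univ _) hmem
  refine ⟨hg1, hg2, fun i α => ?_⟩
  calc ∑ x, (𝒮.M i α x : ℂ) * (𝒮.Q.S x 𝒮.Q.one / 𝒮.Q.S 𝒮.Q.one 𝒮.Q.one)
      = (∑ x, (𝒮.M i α x : ℂ) * 𝒮.Q.S x 𝒮.Q.one) / 𝒮.Q.S 𝒮.Q.one 𝒮.Q.one := by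
        rw [Finset.sum_div]
        exact Finset.sum_congr rfl fun x _ => (mul_div_assoc _ _ _).symm
    _ = b₀ i α / b₀ 𝒮.G.one 𝒮.H.one := by rw [← hg2 i α, hg1]
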